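/- Let c ∈ ℂ and let x, y, z, t ∈ ℂ satisfy P(x,y,z,t) = 2·Re(c). Suppose the fork conditions hold: ( |t| > |t − x·conj(y) + y·z| or |t| > |t − x·conj(y) + conj(x·z)| ) and ( |z| > |z − x·y + conj(x·t)| or |z| > |z − x·y + conj(y)·t| ). Then min(|x|, |y|) ≤ max(6, √|Re(c)|). -/

import Mathlib

/-- The expression `P(x,y,z,t)` from the trace relation. -/
noncomputable def Pfun (x y z t : ℂ) : ℝ :=
  ‖x‖ ^ 2 * ‖y‖ ^ 2 + ‖x‖ ^ 2 + ‖y‖ ^ 2 +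
    ‖z‖ ^ 2 + ‖t‖ ^ 2 - 2 * (x * y * (starRingEnd ℂ) z).re -
    2 * ((starRingEnd ℂ) x * y * t).re - 3

private lemma lemA (a b r s c : ℝ) (ha : 6 ≤ a) (hb : 6 ≤ b) (hr : 0 ≤ r) (hs : 0 ≤ s)
    (hca : c ≤ a^2) (hcb : c ≤ b^2)
    (hmain : a^2*b^2+a^2+b^2+r^2+s^2 ≤ 3+2*c+2*(a*b)*r+2*(a*b)*s)
    (h2 : b*r - a*b < 2*s) (h4 : b*s - a*b < 2*r) : False := by
  have h5 : (b-6)*(r+s) ≥ 0 := mul_nonneg (by linarith) (by linarith)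
  have h6 : 4*(r+s) < 2*(a*b) := by nlinarith
  have hab : 36 ≤ a*b := by nlinarith
  have h7 : 3*(a*b) < 2*(2*(a*b) - (r+s)) := by linarith
  nlinarith [sq_nonneg (r-s), mul_pos (show (0:ℝ) < 2*(2*(a*b)-(r+s))-3*(a*b) by linarith) (show (0:ℝ) < 2*(2*(a*b)-(r+s))+3*(a*b) by nlinarith), sq_nonneg (a*b)]

private lemma lemB0 (a b r s c : ℝ) (ha : 6 ≤ a) (hb : 6 ≤ b) (hr : 0 ≤ r) (hs : 0 ≤ s)
    (hca : c ≤ a^2) (hcb : c ≤ b^2)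
    (hmain : a^2*b^2+a^2+b^2+r^2+s^2 ≤ 3+2*c+2*(a*b)*r+2*(a*b)*s)
    (h2 : b*r - a*b < 2*s) (h3 : a*s - a*b < 2*r)
    (hAB : (r - a*b)^2 ≤ (s - a*b)^2) : False := by
  have hab : 36 ≤ a*b := by nlinarith
  have hmain' : (r - a*b)^2 + (s - a*b)^2 ≤ a*b*(a*b) + 3 := by nlinarith
  have hA : 2*(r - a*b)^2 ≤ (a*b)*(a*b) + 3 := by linarith
  have hr7 : 2*(a*b) ≤ 7*r := by
    by_contra hcon
    push_neg at hcon
    have h5 : 5*(a*b) < 7*(a*b - r) := by linarith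
    nlinarith [mul_pos (show (0:ℝ) < 7*(a*b-r)-5*(a*b) by linarith) (show (0:ℝ) < 7*(a*b-r)+5*(a*b) by nlinarith), mul_nonneg (show (0:ℝ) ≤ a*b - 36 by linarith) (show (0:ℝ) ≤ a*b - 36 by linarith)]
  have h12a : 12*a ≤ 7*r := by nlinarith [mul_nonneg (show (0:ℝ) ≤ 2*a by linarith) (show (0:ℝ) ≤ b - 6 by linarith)]
  have hs1 : 5*(b*r) < 24*s := by nlinarith [mul_nonneg (show (0:ℝ) ≤ b by linarith) (show (0:ℝ) ≤ 7*r-12*a by linarith)]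
  have hs2 : 15*b < 7*s := by
    nlinarith [mul_nonneg (show (0:ℝ) ≤ 5*b by linarith) (show (0:ℝ) ≤ 7*r - 2*(a*b) by linarith), mul_nonneg (show (0:ℝ) ≤ 10*b by linarith) (show (0:ℝ) ≤ a*b - 36 by linarith)]
  have hr2 : 4*(a*s) < 15*r := by nlinarith [mul_nonneg (show (0:ℝ) ≤ a by linarith) (show (0:ℝ) ≤ 7*s-15*b by linarith)]
  have hrpos : 0 < r := by linarith
  nlinarith [mul_lt_mul_of_pos_left hs1 (show (0:ℝ) < a by linarith), mul_nonneg (show (0:ℝ) ≤ r by linarith) (show (0:ℝ) ≤ a*b - 36 by linarith)]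

private lemma lemB (a b r s c : ℝ) (ha : 6 ≤ a) (hb : 6 ≤ b) (hr : 0 ≤ r) (hs : 0 ≤ s)
    (hca : c ≤ a^2) (hcb : c ≤ b^2)
    (hmain : a^2*b^2+a^2+b^2+r^2+s^2 ≤ 3+2*c+2*(a*b)*r+2*(a*b)*s)
    (h2 : b*r - a*b < 2*s) (h3 : a*s - a*b < 2*r) : False := by
  rcases le_total ((r - a*b)^2) ((s - a*b)^2) with hAB | hAB
  · exact lemB0 a b r s c ha hb hr hs hca hcb hmain h2 h3 hAB
  · exact lemB0 b a s r c hb ha hs hr hcb hca (by linarith) (by linarith) (by linarith)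
      (by linarith)

private lemma key (u t : ℂ) (h : ‖t - u‖ < ‖t‖) :
    ‖u‖ < 2 * ‖t‖ := by
  have h1 : ‖t - (t - u)‖ ≤ ‖t‖ + ‖t - u‖ := by
    exact norm_sub_le _ _
  have h3 : t - (t - u) = u := by ring
  rw [h3] at h1
  linarith

theorem fork_lemma (c : ℂ) (x y z t : ℂ) (hP : Pfun x y z t = 2 * c.re)
    (hfork_t : ‖t - x * (starRingEnd ℂ) y + y * z‖ < ‖t‖ ∨
      ‖t - x * (starRingEnd ℂ) y + (starRingEnd ℂ) (x * z)‖ < ‖t‖)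
    (hfork_z : ‖z - x * y + (starRingEnd ℂ) (x * t)‖ < ‖z‖ ∨
      ‖z - x * y + (starRingEnd ℂ) y * t‖ < ‖z‖) :
    min (‖x‖) (‖y‖) ≤ max 6 (Real.sqrt |c.re|) := by
  by_contra hcon
  push_neg at hcon
  set a := ‖x‖ with hadef
  set b := ‖y‖ with hbdef
  set r := ‖z‖ with hrdef
  set s := ‖t‖ with hsdef
  have ha : 6 ≤ a := le_of_lt (lt_of_le_of_lt (le_max_left _ _) (lt_of_lt_of_le hcon (min_le_left _ _)))
  have hb : 6 ≤ b := le_of_lt (lt_of_le_of_lt (le_max_left _ _) (lt_of_lt_of_le hcon (min_le_right _ _)))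
  have hsa : Real.sqrt |c.re| < a := lt_of_le_of_lt (le_max_right _ _) (lt_of_lt_of_le hcon (min_le_left _ _))
  have hsb : Real.sqrt |c.re| < b := lt_of_le_of_lt (le_max_right _ _) (lt_of_lt_of_le hcon (min_le_right _ _))
  have hca : c.re ≤ a^2 := by
    have h1 : |c.re| < a^2 := by
      have := Real.sq_sqrt (abs_nonneg c.re)
      nlinarith [Real.sqrt_nonneg |c.re|]
    calc c.re ≤ |c.re| := le_abs_self _
    _ ≤ a^2 := le_of_lt h1
  have hcb : c.re ≤ b^2 := by
    have h1 : |c.re| < b^2 := by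
      have := Real.sq_sqrt (abs_nonneg c.re)
      nlinarith [Real.sqrt_nonneg |c.re|]
    calc c.re ≤ |c.re| := le_abs_self _
    _ ≤ b^2 := le_of_lt h1
  have hr : 0 ≤ r := norm_nonneg z
  have hs : 0 ≤ s := norm_nonneg t
  -- main inequality
  have hRe1 : (x * y * (starRingEnd ℂ) z).re ≤ a*b*r := by
    calc (x * y * (starRingEnd ℂ) z).re ≤ ‖x * y * (starRingEnd ℂ) z‖ :=
      Complex.re_le_norm _
    _ = a*b*r := by simp [map_mul, Complex.norm_conj, hadef, hbdef, hrdef, hsdef]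
  have hRe2 : ((starRingEnd ℂ) x * y * t).re ≤ a*b*s := by
    calc ((starRingEnd ℂ) x * y * t).re ≤ ‖(starRingEnd ℂ) x * y * t‖ :=
      Complex.re_le_norm _
    _ = a*b*s := by simp [map_mul, Complex.norm_conj, hadef, hbdef, hrdef, hsdef]
  rw [Pfun] at hP
  have hmain : a^2*b^2+a^2+b^2+r^2+s^2 ≤ 3+2*c.re+2*(a*b)*r+2*(a*b)*s := by
    rw [← hadef, ← hbdef, ← hrdef, ← hsdef] at hP
    linarith
  -- fork t consequences
  have hforkt : b*r - a*b < 2*s ∨ a*r - a*b < 2*s := by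
    rcases hfork_t with h | h
    · left
      rw [show t - x * (starRingEnd ℂ) y + y * z
          = t - (x * (starRingEnd ℂ) y - y * z) from by ring] at h
      have hk := key _ _ h
      have hl := abs_norm_sub_norm_le (x * (starRingEnd ℂ) y) (y * z)
      have h1 : ‖x * (starRingEnd ℂ) y‖ = a*b := by
        simp [map_mul, Complex.norm_conj, hadef, hbdef, hrdef, hsdef]
      have h2 : ‖y * z‖ = b*r := by simp [map_mul, hadef, hbdef, hrdef, hsdef]
      rw [h1, h2] at hl
      have := abs_lt.mp (lt_of_le_of_lt hl hk)
      linarith [this.1]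
    · right
      rw [show t - x * (starRingEnd ℂ) y + (starRingEnd ℂ) (x * z)
          = t - (x * (starRingEnd ℂ) y - (starRingEnd ℂ) (x * z)) from by ring] at h
      have hk := key _ _ h
      have hl := abs_norm_sub_norm_le (x * (starRingEnd ℂ) y)
        ((starRingEnd ℂ) (x * z))
      have h1 : ‖x * (starRingEnd ℂ) y‖ = a*b := by
        simp [map_mul, Complex.norm_conj, hadef, hbdef, hrdef, hsdef]
      have h2 : ‖(starRingEnd ℂ) (x * z)‖ = a*r := by
        simp [Complex.norm_conj, map_mul, hadef, hbdef, hrdef, hsdef]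
      rw [h1, h2] at hl
      have := abs_lt.mp (lt_of_le_of_lt hl hk)
      linarith [this.1]
  have hforkz : a*s - a*b < 2*r ∨ b*s - a*b < 2*r := by
    rcases hfork_z with h | h
    · left
      rw [show z - x * y + (starRingEnd ℂ) (x * t)
          = z - (x * y - (starRingEnd ℂ) (x * t)) from by ring] at h
      have hk := key _ _ h
      have hl := abs_norm_sub_norm_le (x * y) ((starRingEnd ℂ) (x * t))
      have h1 : ‖x * y‖ = a*b := by simp [map_mul, hadef, hbdef, hrdef, hsdef]
      have h2 : ‖(starRingEnd ℂ) (x * t)‖ = a*s := by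
        simp [Complex.norm_conj, map_mul, hadef, hbdef, hrdef, hsdef]
      rw [h1, h2] at hl
      have := abs_lt.mp (lt_of_le_of_lt hl hk)
      linarith [this.1]
    · right
      rw [show z - x * y + (starRingEnd ℂ) y * t
          = z - (x * y - (starRingEnd ℂ) y * t) from by ring] at h
      have hk := key _ _ h
      have hl := abs_norm_sub_norm_le (x * y) ((starRingEnd ℂ) y * t)
      have h1 : ‖x * y‖ = a*b := by simp [map_mul, hadef, hbdef, hrdef, hsdef]
      have h2 : ‖(starRingEnd ℂ) y * t‖ = b*s := by
        simp [Complex.norm_conj, map_mul, hadef, hbdef, hrdef, hsdef]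
      rw [h1, h2] at hl
      have := abs_lt.mp (lt_of_le_of_lt hl hk)
      linarith [this.1]
  rcases hforkt with ht | ht <;> rcases hforkz with hz | hz
  · exact lemB a b r s c.re ha hb hr hs hca hcb hmain ht hz
  · exact lemA a b r s c.re ha hb hr hs hca hcb hmain ht hz
  · exact lemA b a r s c.re hb ha hr hs hcb hca (by linarith) (by linarith) (by linarith)
  · exact lemB b a r s c.re hb ha hr hs hcb hca (by linarith) (by linarith) (by linarith)
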